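/- arXiv:2003.13844 — 3 statements merged into one kernel-verified Lean document; each statement's English description precedes it below -/
import Mathlib

section
/- Let X be an n×p real matrix, λ₂ > 0, Q_{λ₂} = I_n − X(XᵀX + nλ₂I_p)⁻¹Xᵀ and Σ̂ = n⁻¹XᵀX. Then for every p×m matrix L, ‖Q_{λ₂}^{1/2} X L‖_F² = n·λ₂·tr(Lᵀ Σ̂ (Σ̂ + λ₂I_p)⁻¹ L), where Q_{λ₂}^{1/2} is the positive semidefinite square root of Q_{λ₂}. -/
set_option maxHeartbeats 1000000

open Matrix

/-- `‖Q_{λ₂}^{1/2} X L‖_F² = nλ₂ tr(Lᵀ Σ̂ (Σ̂ + λ₂I)⁻¹ L)`, where `S = Q_{λ₂}^{1/2}` is the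
positive semidefinite square root of `Q_{λ₂} = I_n − X(XᵀX + nλ₂I)⁻¹Xᵀ` and `Σ̂ = n⁻¹XᵀX`.
Squared Frobenius norms are written as traces. -/
theorem stmt_2 (n p m : ℕ) (hn : 0 < n) (X : Matrix (Fin n) (Fin p) ℝ)
    (l2 : ℝ) (hl2 : 0 < l2)
    (S : Matrix (Fin n) (Fin n) ℝ) (hS : S.PosSemidef)
    (hSS : S * S = (1 : Matrix (Fin n) (Fin n) ℝ)
        - X * (Xᵀ * X + ((n : ℝ) * l2) • (1 : Matrix (Fin p) (Fin p) ℝ))⁻¹ * Xᵀ)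
    (L : Matrix (Fin p) (Fin m) ℝ) :
    ((S * X * L)ᵀ * (S * X * L)).trace
      = (n : ℝ) * l2 * (Lᵀ * ((n : ℝ)⁻¹ • (Xᵀ * X))
          * (((n : ℝ)⁻¹ • (Xᵀ * X)) + l2 • (1 : Matrix (Fin p) (Fin p) ℝ))⁻¹ * L).trace := by
  have hn' : (n : ℝ) ≠ 0 := Nat.cast_ne_zero.mpr hn.ne'
  set A : Matrix (Fin p) (Fin p) ℝ :=
    Xᵀ * X + ((n : ℝ) * l2) • (1 : Matrix (Fin p) (Fin p) ℝ) with hA_def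
  have hc : (0 : ℝ) < (n : ℝ) * l2 := by positivity
  have hcI : (((n : ℝ) * l2) • (1 : Matrix (Fin p) (Fin p) ℝ)).PosDef := by
    rw [smul_eq_diagonal_mul, Matrix.mul_one]
    exact posDef_diagonal_iff.mpr (fun _ => hc)
  have hA : A.PosDef := Matrix.PosDef.posSemidef_add (Matrix.posSemidef_conjTranspose_mul_self X) hcI
  have hAdet : IsUnit A.det := hA.det_pos.ne'.isUnit
  -- key cancellation
  have hcancel : Xᵀ * X * A⁻¹ * A = Xᵀ * X :=
    by rw [Matrix.mul_assoc, Matrix.nonsing_inv_mul A hAdet, Matrix.mul_one]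
  have key : Xᵀ * X - Xᵀ * X * A⁻¹ * (Xᵀ * X)
      = ((n : ℝ) * l2) • (Xᵀ * X * A⁻¹) := by
    calc Xᵀ * X - Xᵀ * X * A⁻¹ * (Xᵀ * X)
        = Xᵀ * X * A⁻¹ * A - Xᵀ * X * A⁻¹ * (Xᵀ * X) := by rw [hcancel]
      _ = Xᵀ * X * A⁻¹ * (A - Xᵀ * X) := by rw [Matrix.mul_sub]
      _ = ((n : ℝ) * l2) • (Xᵀ * X * A⁻¹) := by
          rw [hA_def, add_sub_cancel_left, Matrix.mul_smul, Matrix.mul_one]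
  -- rewrite the inverse on the RHS
  have hsum : ((n : ℝ)⁻¹ • (Xᵀ * X)) + l2 • (1 : Matrix (Fin p) (Fin p) ℝ)
      = (n : ℝ)⁻¹ • A := by
    rw [hA_def, smul_add, smul_smul, inv_mul_cancel_left₀ hn']
  have : Invertible ((n : ℝ)⁻¹) := invertibleOfNonzero (inv_ne_zero hn')
  have hinv : (((n : ℝ)⁻¹ • (Xᵀ * X)) + l2 • (1 : Matrix (Fin p) (Fin p) ℝ))⁻¹
      = (n : ℝ) • A⁻¹ := by
    rw [hsum, Matrix.inv_smul (A := A) ((n:ℝ)⁻¹) hAdet]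
    congr 1
    simp
  -- rewrite LHS
  have hSymm : Sᵀ = S := hS.isHermitian.eq
  have hLHS : (S * X * L)ᵀ * (S * X * L) = Lᵀ * (Xᵀ * (S * S) * X) * L := by
    simp only [Matrix.transpose_mul, hSymm, Matrix.mul_assoc]
  rw [hLHS, hSS]
  have hmid : Xᵀ * ((1 : Matrix (Fin n) (Fin n) ℝ) - X * A⁻¹ * Xᵀ) * X
      = Xᵀ * X - Xᵀ * X * A⁻¹ * (Xᵀ * X) := by
    rw [Matrix.mul_sub, Matrix.mul_one, Matrix.sub_mul]
    simp only [Matrix.mul_assoc]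
  rw [hmid, key, hinv]
  have hR : Lᵀ * ((n : ℝ)⁻¹ • (Xᵀ * X)) * ((n : ℝ) • A⁻¹) * L
      = Lᵀ * (Xᵀ * X * A⁻¹) * L := by
    simp only [Matrix.mul_smul, Matrix.smul_mul, smul_smul, Matrix.mul_assoc]
    rw [mul_inv_cancel₀ hn', one_smul]
  rw [hR]
  rw [show Lᵀ * (((n : ℝ) * l2) • (Xᵀ * X * A⁻¹)) * L
      = ((n : ℝ) * l2) • (Lᵀ * (Xᵀ * X * A⁻¹) * L) by
    rw [Matrix.mul_smul, Matrix.smul_mul]]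
  rw [Matrix.trace_smul, smul_eq_mul]
end

section
/- Let X ∈ ℝ^{n×p}, λ₂ > 0, Σ̂ = n⁻¹XᵀX with smallest nonzero eigenvalue σ_q, Q_{λ₂} = I_n − X(XᵀX+nλ₂I)⁻¹Xᵀ and M = n⁻¹XᵀQ_{λ₂}²X. Then M = λ₂²(Σ̂+λ₂I)⁻¹Σ̂(Σ̂+λ₂I)⁻¹, and max_{1≤j≤p} M_{jj} ≤ (λ₂/(σ_q + λ₂))² · max_{1≤j≤p} Σ̂_{jj}. -/
open Matrix

/-- With `Q_{λ₂} = I − X(XᵀX + nλ₂I)⁻¹Xᵀ`, `Σ̂ = n⁻¹XᵀX` and `M = n⁻¹XᵀQ_{λ₂}²X`: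
`M = λ₂²(Σ̂+λ₂I)⁻¹Σ̂(Σ̂+λ₂I)⁻¹` and `max_j M_jj ≤ (λ₂/(σ_q+λ₂))² max_j Σ̂_jj`, where `σ_q`
is the smallest nonzero eigenvalue of `Σ̂`. -/
theorem stmt_7 (n p : ℕ) (hn : 0 < n) (hp : 0 < p) (X : Matrix (Fin n) (Fin p) ℝ)
    (l2 : ℝ) (hl2 : 0 < l2)
    (hherm : ((n : ℝ)⁻¹ • (Xᵀ * X)).IsHermitian)
    (σq : ℝ) (hσq : 0 < σq)
    (hmem : ∃ i, hherm.eigenvalues i = σq)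
    (hlb : ∀ i, hherm.eigenvalues i ≠ 0 → σq ≤ hherm.eigenvalues i) :
    (n : ℝ)⁻¹ • (Xᵀ * (((1 : Matrix (Fin n) (Fin n) ℝ)
            - X * (Xᵀ * X + ((n : ℝ) * l2) • (1 : Matrix (Fin p) (Fin p) ℝ))⁻¹ * Xᵀ)
          * ((1 : Matrix (Fin n) (Fin n) ℝ)
            - X * (Xᵀ * X + ((n : ℝ) * l2) • (1 : Matrix (Fin p) (Fin p) ℝ))⁻¹ * Xᵀ)) * X)
      = (l2 ^ 2) • ((((n : ℝ)⁻¹ • (Xᵀ * X)) + l2 • (1 : Matrix (Fin p) (Fin p) ℝ))⁻¹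
          * ((n : ℝ)⁻¹ • (Xᵀ * X))
          * (((n : ℝ)⁻¹ • (Xᵀ * X)) + l2 • (1 : Matrix (Fin p) (Fin p) ℝ))⁻¹)
    ∧ Finset.univ.sup' (Finset.univ_nonempty_iff.mpr (Fin.pos_iff_nonempty.mp hp))
        (fun j => ((n : ℝ)⁻¹ • (Xᵀ * (((1 : Matrix (Fin n) (Fin n) ℝ)
              - X * (Xᵀ * X + ((n : ℝ) * l2) • (1 : Matrix (Fin p) (Fin p) ℝ))⁻¹ * Xᵀ)
            * ((1 : Matrix (Fin n) (Fin n) ℝ)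
              - X * (Xᵀ * X + ((n : ℝ) * l2) • (1 : Matrix (Fin p) (Fin p) ℝ))⁻¹ * Xᵀ)) * X)) j j)
      ≤ (l2 / (σq + l2)) ^ 2
        * Finset.univ.sup' (Finset.univ_nonempty_iff.mpr (Fin.pos_iff_nonempty.mp hp))
            (fun j => ((n : ℝ)⁻¹ • (Xᵀ * X)) j j) := by
  have hn' : (0:ℝ) < n := by exact_mod_cast hn
  set S : Matrix (Fin p) (Fin p) ℝ := (n:ℝ)⁻¹ • (Xᵀ * X) with hS
  set B : Matrix (Fin p) (Fin p) ℝ := Xᵀ * X + ((n:ℝ) * l2) • (1 : Matrix (Fin p) (Fin p) ℝ)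
    with hBdef
  set A : Matrix (Fin p) (Fin p) ℝ := S + l2 • (1 : Matrix (Fin p) (Fin p) ℝ) with hAdef
  have hBA : B = (n:ℝ) • A := by
    rw [hAdef, hS, smul_add, smul_smul, mul_inv_cancel₀ hn'.ne', one_smul, smul_smul]
  -- S is positive semidefinite
  have hPSD : S.PosSemidef := by
    have hc : ((Real.sqrt n)⁻¹ * (Real.sqrt n)⁻¹) = (n:ℝ)⁻¹ := by
      rw [← mul_inv, Real.mul_self_sqrt (by positivity)]
    have h1 : S = ((Real.sqrt n)⁻¹ • X)ᴴ * ((Real.sqrt n)⁻¹ • X) := by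
      rw [hS]
      simp [conjTranspose_smul, Matrix.smul_mul, Matrix.mul_smul, smul_smul, hc,
        conjTranspose_eq_transpose_of_trivial]
    rw [h1]
    exact posSemidef_conjTranspose_mul_self _
  set d : Fin p → ℝ := hherm.eigenvalues with hdd
  have hd : ∀ i, 0 ≤ d i := fun i => hPSD.eigenvalues_nonneg i
  set U : Matrix (Fin p) (Fin p) ℝ := (hherm.eigenvectorUnitary : Matrix (Fin p) (Fin p) ℝ)
    with hUdef
  have hspec : S = U * diagonal d * star U := by
    have := hherm.spectral_theorem
    simpa [RCLike.ofReal_real_eq_id, Function.id_comp] using this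
  have hU1 : U * star U = 1 := mem_unitaryGroup_iff.mp (hherm.eigenvectorUnitary).2
  have hU2 : star U * U = 1 := mem_unitaryGroup_iff'.mp (hherm.eigenvectorUnitary).2
  have hpos : ∀ i, 0 < d i + l2 := fun i => add_pos_of_nonneg_of_pos (hd i) hl2
  have key : ∀ f g : Fin p → ℝ, (U * diagonal f * star U) * (U * diagonal g * star U)
      = U * diagonal (fun i => f i * g i) * star U := by
    intro f g
    have : diagonal f * diagonal g = diagonal (fun i => f i * g i) := by
      rw [diagonal_mul_diagonal]
    rw [← this]
    simp only [Matrix.mul_assoc]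
    rw [← Matrix.mul_assoc (star U) U (diagonal g * star U), hU2, Matrix.one_mul]
  have hAdiag : A = U * diagonal (fun i => d i + l2) * star U := by
    have e1 : diagonal (fun i => d i + l2) = diagonal d + l2 • (1 : Matrix (Fin p) (Fin p) ℝ) := by
      rw [smul_one_eq_diagonal]
      ext i j
      by_cases h : i = j <;> simp [h]
    rw [hAdef, hspec, e1, Matrix.mul_add, Matrix.add_mul, mul_smul_comm, smul_mul_assoc,
      Matrix.mul_one, hU1]
  set Ainv : Matrix (Fin p) (Fin p) ℝ := U * diagonal (fun i => (d i + l2)⁻¹) * star U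
    with hAinvdef
  have hdiaginv : ∀ (h : ∀ i : Fin p, ((fun i => d i + l2) i) * ((d i + l2)⁻¹) = 1), True :=
    fun _ => trivial
  have hmul1 : A * Ainv = 1 := by
    rw [hAdiag, hAinvdef, key]
    have : (fun i => (d i + l2) * (d i + l2)⁻¹) = fun _ : Fin p => (1:ℝ) := by
      funext i; exact mul_inv_cancel₀ (hpos i).ne'
    rw [this, diagonal_one, Matrix.mul_one, hU1]
  have hmul2 : Ainv * A = 1 := by
    rw [hAdiag, hAinvdef, key]
    have : (fun i => (d i + l2)⁻¹ * (d i + l2)) = fun _ : Fin p => (1:ℝ) := by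
      funext i; exact inv_mul_cancel₀ (hpos i).ne'
    rw [this, diagonal_one, Matrix.mul_one, hU1]
  have hAinv : A⁻¹ = Ainv := inv_eq_right_inv hmul1
  have hBinv : B⁻¹ = (n:ℝ)⁻¹ • Ainv := by
    apply inv_eq_right_inv
    rw [hBA, smul_mul_assoc, mul_smul_comm, smul_smul, mul_inv_cancel₀ hn'.ne', one_smul, hmul1]
  have hBB1 : B * B⁻¹ = 1 := by
    rw [hBinv, hBA, smul_mul_assoc, mul_smul_comm, smul_smul, mul_inv_cancel₀ hn'.ne', one_smul,
      hmul1]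
  have hBB2 : B⁻¹ * B = 1 := by
    rw [hBinv, hBA, smul_mul_assoc, mul_smul_comm, smul_smul, inv_mul_cancel₀ hn'.ne', one_smul,
      hmul2]
  set Q : Matrix (Fin n) (Fin n) ℝ := 1 - X * B⁻¹ * Xᵀ with hQdef
  have hXtX : Xᵀ * X = B - ((n:ℝ) * l2) • (1 : Matrix (Fin p) (Fin p) ℝ) := by
    rw [hBdef]; abel
  have hXQ : Xᵀ * Q = ((n:ℝ) * l2) • (B⁻¹ * Xᵀ) := by
    have h : Xᵀ * Q = Xᵀ - (B - ((n:ℝ) * l2) • 1) * (B⁻¹ * Xᵀ) := by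
      rw [hQdef, ← hXtX, Matrix.mul_sub, Matrix.mul_one]
      simp only [Matrix.mul_assoc]
    rw [h, Matrix.sub_mul, ← Matrix.mul_assoc, hBB1, Matrix.one_mul, Matrix.smul_mul,
      Matrix.one_mul]
    abel
  have hQX : Q * X = ((n:ℝ) * l2) • (X * B⁻¹) := by
    have h : Q * X = X - (X * B⁻¹) * (B - ((n:ℝ) * l2) • 1) := by
      rw [hQdef, ← hXtX, Matrix.sub_mul, Matrix.one_mul]
      simp only [Matrix.mul_assoc]
    rw [h, Matrix.mul_sub, Matrix.mul_assoc, hBB2, Matrix.mul_one, Matrix.mul_smul,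
      Matrix.mul_one]
    abel
  have hM : (n:ℝ)⁻¹ • (Xᵀ * (Q * Q) * X) = (l2 ^ 2) • (Ainv * S * Ainv) := by
    have h1 : Xᵀ * (Q * Q) * X = (Xᵀ * Q) * (Q * X) := by
      simp only [Matrix.mul_assoc]
    rw [h1, hXQ, hQX, hBinv]
    have h2 : Ainv * S * Ainv = (n:ℝ)⁻¹ • (Ainv * (Xᵀ * X) * Ainv) := by
      rw [hS]
      simp only [Matrix.mul_smul, Matrix.smul_mul]
    rw [h2]
    simp only [Matrix.smul_mul, Matrix.mul_smul, smul_smul, Matrix.mul_assoc]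
    congr 1
    field_simp
  refine ⟨by rw [hM, hAinv], ?_⟩
  -- second part
  simp only [hM]
  have hMd : (l2 ^ 2) • (Ainv * S * Ainv)
      = U * diagonal (fun i => l2 ^ 2 * ((d i + l2)⁻¹ * d i * (d i + l2)⁻¹)) * star U := by
    rw [hAinvdef, hspec, key, key, ← Matrix.smul_mul, ← mul_smul_comm, ← Matrix.diagonal_smul]
    congr 2
  have entry : ∀ (g : Fin p → ℝ) (j : Fin p),
      (U * diagonal g * star U) j j = ∑ i, g i * (U j i)^2 := by
    intro g j
    rw [Matrix.mul_apply]
    refine Finset.sum_congr rfl fun i _ => ?_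
    rw [Matrix.mul_diagonal]
    have : (star U) i j = U j i := by
      simp [Matrix.star_apply]
    rw [this]
    ring
  have Sjj : ∀ j, S j j = ∑ i, d i * (U j i)^2 := by
    intro j; rw [hspec]; exact entry d j
  set c : ℝ := (l2 / (σq + l2)) ^ 2 with hcdef
  have hc0 : 0 ≤ c := sq_nonneg _
  have hterm : ∀ i j : Fin p,
      (l2 ^ 2 * ((d i + l2)⁻¹ * d i * (d i + l2)⁻¹)) * (U j i)^2 ≤ c * (d i * (U j i)^2) := by
    intro i j
    rcases eq_or_ne (d i) 0 with h0 | h0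
    · simp [h0]
    · have hσ := hlb i h0
      have h1 : (d i + l2)⁻¹ ≤ (σq + l2)⁻¹ := by
        apply inv_anti₀ (by positivity) (by linarith)
      have h2 : ((d i + l2)⁻¹)^2 ≤ ((σq + l2)⁻¹)^2 :=
        pow_le_pow_left₀ (inv_nonneg.mpr (hpos i).le) h1 2
      have hnn : 0 ≤ d i * (U j i)^2 := mul_nonneg (hd i) (sq_nonneg _)
      calc (l2 ^ 2 * ((d i + l2)⁻¹ * d i * (d i + l2)⁻¹)) * (U j i)^2
          = (l2 ^ 2 * ((d i + l2)⁻¹)^2) * (d i * (U j i)^2) := by ring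
        _ ≤ (l2 ^ 2 * ((σq + l2)⁻¹)^2) * (d i * (U j i)^2) :=
            mul_le_mul_of_nonneg_right (mul_le_mul_of_nonneg_left h2 (by positivity)) hnn
        _ = c * (d i * (U j i)^2) := by rw [hcdef, div_pow]; ring_nf; rw [inv_pow]; ring
  apply Finset.sup'_le
  intro j _
  have hMjj : ((l2 ^ 2) • (Ainv * S * Ainv)) j j
      = ∑ i, (l2 ^ 2 * ((d i + l2)⁻¹ * d i * (d i + l2)⁻¹)) * (U j i)^2 := by
    rw [hMd]; exact entry _ j
  have step1 : ((l2 ^ 2) • (Ainv * S * Ainv)) j j ≤ c * S j j := by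
    rw [hMjj, Sjj, Finset.mul_sum]
    exact Finset.sum_le_sum fun i _ => hterm i j
  have step2 : S j j ≤ Finset.univ.sup' (Finset.univ_nonempty_iff.mpr
      (Fin.pos_iff_nonempty.mp hp)) (fun j => S j j) :=
    Finset.le_sup' (fun j => S j j) (Finset.mem_univ j)
  calc ((l2 ^ 2) • (Ainv * S * Ainv)) j j ≤ c * S j j := step1
    _ ≤ c * _ := mul_le_mul_of_nonneg_left step2 hc0
end

section
/- Let B ∈ ℝ^{K×m} with rank K and suppose λ_K(m⁻¹BBᵀ) ≥ c' > 0 and all entries of B are bounded by c'' in absolute value. Let ψ ∈ ℝ^m satisfy ‖ψ‖₀ ≤ d (at most d nonzero coordinates) and ‖ψ‖_∞ ≤ c. Then with P_B = Bᵀ(BBᵀ)⁻¹B, (1/m)‖P_B ψ‖₂² ≤ (c c'')² d² K / (c' m²), and for every standard basis vector e_ℓ of ℝ^m, |e_ℓᵀ P_B ψ| ≤ c (c'')² K d / (c' m). -/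
set_option maxHeartbeats 1000000

open Matrix

/-- For `B ∈ ℝ^{K×m}` of rank `K` with `λ_K(m⁻¹BBᵀ) ≥ c' > 0` and `|B_{kj}| ≤ c''`, and
`ψ` with at most `d` nonzero entries, each bounded by `c`: with `P_B = Bᵀ(BBᵀ)⁻¹B`,
`(1/m)‖P_Bψ‖₂² ≤ (cc'')²d²K/(c'm²)` and `|e_ℓᵀP_Bψ| ≤ c(c'')²Kd/(c'm)` for all `ℓ`. -/
theorem stmt_18 {K m : ℕ} (hm : 0 < m) (hK : 0 < K) (hKm : K < m)
    (B : Matrix (Fin K) (Fin m) ℝ) (hrank : B.rank = K)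
    (c' c'' : ℝ) (hc' : 0 < c')
    (hlb : ∀ v : Fin K → ℝ, c' * (v ⬝ᵥ v) ≤ v ⬝ᵥ ((m : ℝ)⁻¹ • (B * Bᵀ)).mulVec v)
    (hBbd : ∀ k j, |B k j| ≤ c'')
    (ψ : Fin m → ℝ) (d : ℕ) (c : ℝ)
    (hsupp : {j : Fin m | ψ j ≠ 0}.ncard ≤ d) (hψ : ∀ j, |ψ j| ≤ c) :
    (m : ℝ)⁻¹ * (((Bᵀ * (B * Bᵀ)⁻¹ * B).mulVec ψ) ⬝ᵥ ((Bᵀ * (B * Bᵀ)⁻¹ * B).mulVec ψ))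
        ≤ (c * c'') ^ 2 * (d : ℝ) ^ 2 * (K : ℝ) / (c' * (m : ℝ) ^ 2)
    ∧ ∀ ℓ : Fin m, |((Bᵀ * (B * Bᵀ)⁻¹ * B).mulVec ψ) ℓ|
        ≤ c * c'' ^ 2 * (K : ℝ) * (d : ℝ) / (c' * (m : ℝ)) := by
  have hm0 : (0:ℝ) < m := by exact_mod_cast hm
  have hα : (0:ℝ) < c' * m := mul_pos hc' hm0
  have hc0 : (0:ℝ) ≤ c := (abs_nonneg _).trans (hψ ⟨0, hm⟩)
  have hc''0 : (0:ℝ) ≤ c'' := (abs_nonneg _).trans (hBbd ⟨0, hK⟩ ⟨0, hm⟩)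
  set A := B * Bᵀ with hAdef
  -- A is positive definite
  have hApd : A.PosDef := by
    refine Matrix.PosDef.of_dotProduct_mulVec_pos ?_ ?_
    · show Aᴴ = A
      rw [hAdef]
      simp [conjTranspose_mul, Matrix.mul_assoc]
    · intro x hx
      have h1 := hlb x
      have h2 : x ⬝ᵥ ((m : ℝ)⁻¹ • A).mulVec x = (m:ℝ)⁻¹ * (x ⬝ᵥ A.mulVec x) := by
        rw [smul_mulVec, dotProduct_smul]; rfl
      rw [h2] at h1
      have hxx : 0 < x ⬝ᵥ x := by
        have hnn : 0 ≤ x ⬝ᵥ x := Finset.sum_nonneg fun i _ => mul_self_nonneg _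
        rcases hnn.eq_or_lt with h | h
        · exact absurd ((dotProduct_self_eq_zero).mp h.symm) hx
        · exact h
      have : 0 < (m:ℝ)⁻¹ * (x ⬝ᵥ A.mulVec x) := lt_of_lt_of_le (by positivity) h1
      have hpos : 0 < x ⬝ᵥ A.mulVec x := by
        by_contra hcon
        push_neg at hcon
        nlinarith [inv_pos.mpr hm0]
      simpa using hpos
  have hAinv : A * A⁻¹ = 1 := Matrix.mul_nonsing_inv A hApd.det_pos.ne'.isUnit
  set w := B.mulVec ψ with hwdef
  set v := A⁻¹.mulVec w with hvdef
  have hAv : A.mulVec v = w := by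
    rw [hvdef, mulVec_mulVec, hAinv, one_mulVec]
  have hPψ : (Bᵀ * A⁻¹ * B).mulVec ψ = Bᵀ.mulVec v := by
    rw [← mulVec_mulVec, ← mulVec_mulVec, hvdef, hwdef]
  -- quadratic form lower bound
  have hc1 : c' * m * (v ⬝ᵥ v) ≤ v ⬝ᵥ w := by
    have h1 := hlb v
    have h2 : v ⬝ᵥ ((m : ℝ)⁻¹ • A).mulVec v = (m:ℝ)⁻¹ * (v ⬝ᵥ w) := by
      rw [smul_mulVec, dotProduct_smul, hAv]; rfl
    rw [h2] at h1
    calc c' * m * (v ⬝ᵥ v) = m * (c' * (v ⬝ᵥ v)) := by ring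
    _ ≤ m * ((m:ℝ)⁻¹ * (v ⬝ᵥ w)) := by
        exact mul_le_mul_of_nonneg_left h1 hm0.le
    _ = v ⬝ᵥ w := by field_simp
  -- norm of projection squared
  have hsq : (Bᵀ.mulVec v) ⬝ᵥ (Bᵀ.mulVec v) = v ⬝ᵥ w := by
    conv_rhs => rw [← hAv, hAdef, ← mulVec_mulVec, dotProduct_mulVec,
      ← mulVec_transpose]
  set P := v ⬝ᵥ v with hPdef
  set Q := w ⬝ᵥ w with hQdef
  set S := v ⬝ᵥ w with hSdef
  have hP0 : 0 ≤ P := Finset.sum_nonneg fun i _ => mul_self_nonneg _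
  have hQ0 : 0 ≤ Q := Finset.sum_nonneg fun i _ => mul_self_nonneg _
  have hCS : S ^ 2 ≤ P * Q := by
    have := Finset.sum_mul_sq_le_sq_mul_sq Finset.univ v w
    simpa [hSdef, hPdef, hQdef, dotProduct, sq] using this
  have hS0 : 0 ≤ S := le_trans (by positivity) hc1
  -- entrywise bound on w
  have hF : ∀ k, |w k| ≤ d * c * c'' := by
    intro k
    have hFset : {j : Fin m | ψ j ≠ 0} = ↑(Finset.univ.filter (fun j => ψ j ≠ 0)) := by
      ext j; simp
    rw [hFset, Set.ncard_coe_finset] at hsupp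
    have hwk : w k = ∑ j, B k j * ψ j := rfl
    rw [hwk]
    calc |∑ j, B k j * ψ j| ≤ ∑ j, |B k j * ψ j| := Finset.abs_sum_le_sum_abs _ _
    _ = ∑ j ∈ Finset.univ.filter (fun j => ψ j ≠ 0), |B k j * ψ j| := by
        refine (Finset.sum_filter_of_ne ?_).symm
        intro j _ hne hz
        simp [hz] at hne
    _ ≤ ∑ j ∈ Finset.univ.filter (fun j => ψ j ≠ 0), c'' * c := by
        refine Finset.sum_le_sum fun j _ => ?_
        rw [abs_mul]
        exact mul_le_mul (hBbd k j) (hψ j) (abs_nonneg _) hc''0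
    _ = (Finset.univ.filter (fun j => ψ j ≠ 0)).card * (c'' * c) := by
        rw [Finset.sum_const, nsmul_eq_mul]
    _ ≤ (d : ℝ) * (c'' * c) := by
        have hcard : ((Finset.univ.filter (fun j => ψ j ≠ 0)).card : ℝ) ≤ d := by
          exact_mod_cast hsupp
        exact mul_le_mul_of_nonneg_right hcard (by positivity)
    _ = d * c * c'' := by ring
  have hQ2 : Q ≤ K * (d * c * c'') ^ 2 := by
    have : Q = ∑ k, w k * w k := rfl
    rw [this]
    calc ∑ k, w k * w k ≤ ∑ k : Fin K, (d * c * c'') ^ 2 := by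
          refine Finset.sum_le_sum fun k _ => ?_
          have := hF k
          nlinarith [abs_nonneg (w k), sq_abs (w k)]
    _ = K * (d * c * c'') ^ 2 := by simp [mul_comm]
  -- key scalar bound : c'*m*S ≤ Q
  have key : c' * m * S ≤ Q := by
    rcases hS0.eq_or_lt with h | h
    · rw [← h]; simpa using hQ0
    · have h2 : (c' * m * S) * S ≤ Q * S := by
        nlinarith [mul_le_mul_of_nonneg_right hc1 hQ0,
          mul_le_mul_of_nonneg_left hCS hα.le]
      exact le_of_mul_le_mul_right h2 h
  have hQ3 : c' * m * S ≤ (K:ℝ) * (d * c * c'') ^ 2 := key.trans hQ2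
  constructor
  · rw [hPψ, hsq]
    rw [le_div_iff₀ (by positivity)]
    have hre : (m:ℝ)⁻¹ * S * (c' * (m:ℝ) ^ 2) = c' * m * S := by
      field_simp
    calc (m:ℝ)⁻¹ * S * (c' * (m:ℝ) ^ 2) = c' * m * S := hre
    _ ≤ (K:ℝ) * (d * c * c'') ^ 2 := hQ3
    _ = (c * c'') ^ 2 * (d:ℝ) ^ 2 * (K:ℝ) := by ring
  · intro ℓ
    rw [hPψ]
    set u : Fin K → ℝ := fun k => B k ℓ with hudef
    have hu : (Bᵀ *ᵥ v) ℓ = u ⬝ᵥ v := by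
      simp [mulVec, dotProduct, transpose_apply, hudef]
    have hU : u ⬝ᵥ u ≤ (K:ℝ) * c'' ^ 2 := by
      calc u ⬝ᵥ u = ∑ k, u k * u k := rfl
      _ ≤ ∑ k : Fin K, c'' ^ 2 := by
          refine Finset.sum_le_sum fun k _ => ?_
          have := hBbd k ℓ
          nlinarith [abs_nonneg (B k ℓ), sq_abs (B k ℓ)]
      _ = (K:ℝ) * c'' ^ 2 := by simp [mul_comm]
    have hU0 : 0 ≤ u ⬝ᵥ u := Finset.sum_nonneg fun i _ => mul_self_nonneg _
    have hCS2 : (u ⬝ᵥ v) ^ 2 ≤ (u ⬝ᵥ u) * P := by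
      have := Finset.sum_mul_sq_le_sq_mul_sq Finset.univ u v
      simpa [hPdef, dotProduct, sq] using this
    have hP2 : (c' * m) ^ 2 * P ≤ Q := by
      rcases hP0.eq_or_lt with h | h
      · rw [← h]; simpa using hQ0
      · have hsq2 : (c' * m * P) ^ 2 ≤ S ^ 2 := by
          have h0 : 0 ≤ c' * m * P := by positivity
          nlinarith [hc1]
        have h2 : ((c' * m) ^ 2 * P) * P ≤ Q * P := by nlinarith [hCS, hsq2]
        exact le_of_mul_le_mul_right h2 h
    have hT2 : ((u ⬝ᵥ v) * (c' * m)) ^ 2 ≤ (c * c'' ^ 2 * (K:ℝ) * (d:ℝ)) ^ 2 := by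
      have h1 : (c' * m) ^ 2 * (u ⬝ᵥ v) ^ 2 ≤ (u ⬝ᵥ u) * ((c' * m) ^ 2 * P) :=
        by nlinarith [hCS2, sq_nonneg (c' * m)]
      have h2 : (u ⬝ᵥ u) * ((c' * m) ^ 2 * P) ≤ ((K:ℝ) * c'' ^ 2) * ((K:ℝ) * (d * c * c'') ^ 2) := by
        have := mul_le_mul hU hP2 (by positivity) (by positivity)
        exact this.trans (by nlinarith [hU, hQ2, hU0])
      nlinarith [h1, h2]
    have hR0 : (0:ℝ) ≤ c * c'' ^ 2 * (K:ℝ) * (d:ℝ) := by positivity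
    rw [hu, abs_le]
    constructor
    · rw [neg_le, le_div_iff₀ hα]
      nlinarith [hT2, hR0, sq_nonneg ((u ⬝ᵥ v) * (c' * m) + c * c'' ^ 2 * (K:ℝ) * (d:ℝ))]
    · rw [le_div_iff₀ hα]
      nlinarith [hT2, hR0, sq_nonneg ((u ⬝ᵥ v) * (c' * m) - c * c'' ^ 2 * (K:ℝ) * (d:ℝ))]
end
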